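/- Let A = (a_{ji}) be a d × ν matrix of nonnegative integers, K a field, and π : K[w_1,…,w_ν] → K[q_1,…,q_d] the K-algebra homomorphism defined by π(w_i) = ∏_{j=1}^d q_j^{a_{ji}}. Then the kernel of π equals the ideal of K[w_1,…,w_ν] generated by all binomials W^{z^+} − W^{z^-}, where z ranges over the integer vectors in ℤ^ν with A z = 0. -/

import Mathlib

open MvPolynomial

private lemma mono_eq' {ν : ℕ} {K : Type*} [Field K] (u : Fin ν →₀ ℕ) :
    (monomial u (1:K)) = ∏ i, (X i : MvPolynomial (Fin ν) K) ^ u i := by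
  rw [monomial_eq, C_1, one_mul, Finsupp.prod_fintype]
  intro i; exact pow_zero _

private lemma prod_eq' {ν : ℕ} {K : Type*} [Field K] (b : Fin ν → ℕ) :
    (∏ i, (X i : MvPolynomial (Fin ν) K) ^ b i)
      = monomial (Finsupp.equivFunOnFinite.symm b) 1 := by
  rw [mono_eq']; rfl

private lemma pi_monomial' {d ν : ℕ} {K : Type*} [Field K]
    (A : Fin d → Fin ν → ℕ) (u : Fin ν →₀ ℕ) (c : K) :
    aeval (fun i : Fin ν => ∏ j, (X j : MvPolynomial (Fin d) K) ^ A j i) (monomial u c)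
      = monomial (Finsupp.equivFunOnFinite.symm (fun j => ∑ i, A j i * u i)) c := by
  rw [aeval_monomial, Finsupp.prod_fintype _ _ (fun i => pow_zero _)]
  have : ∏ i, (∏ j, (X j : MvPolynomial (Fin d) K) ^ A j i) ^ u i
      = monomial (Finsupp.equivFunOnFinite.symm (fun j => ∑ i, A j i * u i)) 1 := by
    rw [← prod_eq']
    simp_rw [← Finset.prod_pow, ← pow_mul]
    rw [Finset.prod_comm]
    simp_rw [Finset.prod_pow_eq_pow_sum]
  rw [this, algebraMap_eq]
  simp [C_mul_monomial]

private lemma key' {d ν : ℕ} {K : Type*} [Field K] (A : Fin d → Fin ν → ℕ) (u v : Fin ν →₀ ℕ)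
    (h : ∀ j, ∑ i, A j i * u i = ∑ i, A j i * v i) :
    (monomial u (1:K)) - monomial v 1 ∈ Ideal.span { p : MvPolynomial (Fin ν) K |
          ∃ z : Fin ν → ℤ, (∀ j, ∑ i, (A j i : ℤ) * z i = 0) ∧
            p = (∏ i, (X i : MvPolynomial (Fin ν) K) ^ (z i).toNat)
              - ∏ i, (X i : MvPolynomial (Fin ν) K) ^ (- z i).toNat } := by
  set z : Fin ν → ℤ := fun i => (u i : ℤ) - v i with hzdef
  have hz : ∀ j, ∑ i, (A j i : ℤ) * z i = 0 := by
    intro j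
    have := h j
    simp only [hzdef, mul_sub, Finset.sum_sub_distrib]
    rw [sub_eq_zero]
    exact_mod_cast this
  have hgen : ((∏ i, (X i : MvPolynomial (Fin ν) K) ^ (z i).toNat)
      - ∏ i, (X i : MvPolynomial (Fin ν) K) ^ (- z i).toNat) ∈ Ideal.span
      { p : MvPolynomial (Fin ν) K |
          ∃ z : Fin ν → ℤ, (∀ j, ∑ i, (A j i : ℤ) * z i = 0) ∧
            p = (∏ i, (X i : MvPolynomial (Fin ν) K) ^ (z i).toNat)
              - ∏ i, (X i : MvPolynomial (Fin ν) K) ^ (- z i).toNat } :=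
    Ideal.subset_span ⟨z, hz, rfl⟩
  have hfac : (monomial u (1:K)) - monomial v 1
      = (∏ i, (X i : MvPolynomial (Fin ν) K) ^ (min (u i) (v i)))
        * ((∏ i, (X i : MvPolynomial (Fin ν) K) ^ (z i).toNat)
          - ∏ i, (X i : MvPolynomial (Fin ν) K) ^ (- z i).toNat) := by
    rw [mul_sub, ← Finset.prod_mul_distrib, ← Finset.prod_mul_distrib]
    simp_rw [← pow_add]
    have h1 : ∀ i, min (u i) (v i) + (z i).toNat = u i := by
      intro i; simp only [hzdef]; omega
    have h2 : ∀ i, min (u i) (v i) + (- z i).toNat = v i := by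
      intro i; simp only [hzdef]; omega
    simp_rw [h1, h2, mono_eq']
  rw [hfac]
  exact Ideal.mul_mem_left _ _ hgen

private lemma coeff_pi' {d ν : ℕ} {K : Type*} [Field K]
    (A : Fin d → Fin ν → ℕ) (p : MvPolynomial (Fin ν) K) (b : Fin d →₀ ℕ) :
    coeff b (aeval (fun i : Fin ν => ∏ j, (X j : MvPolynomial (Fin d) K) ^ A j i) p)
    = ∑ v ∈ p.support.filter (fun v =>
        Finsupp.equivFunOnFinite.symm (fun j => ∑ i, A j i * v i) = b),
        coeff v p := by
  conv_lhs => rw [p.as_sum, map_sum]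
  simp_rw [pi_monomial']
  rw [coeff_sum]
  simp_rw [coeff_monomial]
  rw [Finset.sum_filter]

/-- Let A = (a_{ji}) be a d × ν matrix of nonnegative integers,
K a field, and π : K[w_1,…,w_ν] → K[q_1,…,q_d] the K-algebra homomorphism
with π(w_i) = ∏_j q_j^{a_{ji}}.  Then ker π equals the ideal generated by all
binomials W^{z^+} − W^{z^-}, where z ranges over the integer vectors in ℤ^ν
with A z = 0. -/
theorem stmt_1 (d ν : ℕ) (A : Fin d → Fin ν → ℕ) (K : Type*) [Field K] :
    RingHom.ker
        (aeval (fun i : Fin ν => ∏ j, (X j : MvPolynomial (Fin d) K) ^ A j i) :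
          MvPolynomial (Fin ν) K →ₐ[K] MvPolynomial (Fin d) K)
      = Ideal.span { p : MvPolynomial (Fin ν) K |
          ∃ z : Fin ν → ℤ, (∀ j, ∑ i, (A j i : ℤ) * z i = 0) ∧
            p = (∏ i, (X i : MvPolynomial (Fin ν) K) ^ (z i).toNat)
              - ∏ i, (X i : MvPolynomial (Fin ν) K) ^ (- z i).toNat } := by
  set π := (aeval (fun i : Fin ν => ∏ j, (X j : MvPolynomial (Fin d) K) ^ A j i) :
          MvPolynomial (Fin ν) K →ₐ[K] MvPolynomial (Fin d) K) with hπ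
  set S := { p : MvPolynomial (Fin ν) K |
          ∃ z : Fin ν → ℤ, (∀ j, ∑ i, (A j i : ℤ) * z i = 0) ∧
            p = (∏ i, (X i : MvPolynomial (Fin ν) K) ^ (z i).toNat)
              - ∏ i, (X i : MvPolynomial (Fin ν) K) ^ (- z i).toNat } with hS
  set I := Ideal.span S with hI
  -- easy direction
  have hle : I ≤ RingHom.ker π := by
    rw [hI, Ideal.span_le]
    rintro _ ⟨z, hz, rfl⟩
    simp only [SetLike.mem_coe, RingHom.mem_ker, map_sub, sub_eq_zero]
    have hmap : ∀ b : Fin ν → ℕ,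
        π (∏ i, (X i : MvPolynomial (Fin ν) K) ^ b i)
          = monomial (Finsupp.equivFunOnFinite.symm (fun j => ∑ i, A j i * b i)) 1 := by
      intro b
      rw [prod_eq', hπ, pi_monomial']
      rfl
    rw [hmap, hmap]
    congr 2
    ext j
    have := hz j
    have hsplit : ∀ i : Fin ν, (z i) = ((z i).toNat : ℤ) - ((-z i).toNat : ℤ) := by
      intro i; omega
    have : (∑ i, (A j i : ℤ) * ((z i).toNat : ℤ)) = ∑ i, (A j i : ℤ) * ((-z i).toNat : ℤ) := by
      rw [← sub_eq_zero, ← Finset.sum_sub_distrib]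
      calc (∑ i, ((A j i : ℤ) * ((z i).toNat : ℤ) - (A j i : ℤ) * ((-z i).toNat : ℤ)))
          = ∑ i, (A j i : ℤ) * z i := by
            apply Finset.sum_congr rfl; intro i _; rw [← mul_sub, ← hsplit]
        _ = 0 := hz j
    exact_mod_cast this
  -- hard direction by induction on support card
  have hker : ∀ n (p : MvPolynomial (Fin ν) K), p.support.card ≤ n → π p = 0 → p ∈ I := by
    intro n
    induction n with
    | zero =>
      intro p hc hp
      have : p = 0 := by
        rwa [Nat.le_zero, Finset.card_eq_zero, support_eq_empty] at hc
      simp [this]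
    | succ n ih =>
      intro p hc hp
      by_cases h0 : p = 0
      · simp [h0]
      obtain ⟨u, hu⟩ := support_nonempty.mpr h0
      set φ : (Fin ν →₀ ℕ) → (Fin d →₀ ℕ) :=
        fun v => Finsupp.equivFunOnFinite.symm (fun j => ∑ i, A j i * v i) with hφ
      set T := p.support.filter (fun v => φ v = φ u) with hT
      have huT : u ∈ T := Finset.mem_filter.mpr ⟨hu, rfl⟩
      have hsum : ∑ v ∈ T, coeff v p = 0 := by
        have h1 := congrArg (coeff (φ u)) hp
        rw [coeff_zero, hπ, coeff_pi'] at h1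
        exact h1.symm ▸ rfl
      set r := ∑ v ∈ T, (coeff v p) • ((monomial v (1:K)) - monomial u 1) with hr
      have hrI : r ∈ I := by
        apply Submodule.sum_mem
        intro v hv
        apply Submodule.smul_of_tower_mem
        apply key'
        intro j
        have := (Finset.mem_filter.mp hv).2
        have := congrFun (congrArg (fun f => (Finsupp.equivFunOnFinite f : Fin d → ℕ))
          this) j
        simpa [hφ] using this
      have hre : r = ∑ v ∈ T, monomial v (coeff v p) := by
        rw [hr]
        simp_rw [smul_sub, Finset.sum_sub_distrib, ← Finset.sum_smul, hsum, zero_smul,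
          sub_zero, smul_monomial, smul_eq_mul, mul_one]
      set q := p - r with hq
      have hqc : ∀ v, coeff v q = if v ∈ T then 0 else coeff v p := by
        intro v
        rw [hq, coeff_sub, hre, coeff_sum]
        simp_rw [coeff_monomial]
        rw [Finset.sum_ite_eq' T v (fun w => coeff w p)]
        split <;> simp
      have hqsupp : q.support ⊆ p.support \ T := by
        intro v hv
        rw [mem_support_iff, hqc] at hv
        rw [Finset.mem_sdiff]
        split at hv
        · exact absurd rfl hv
        · exact ⟨mem_support_iff.mpr hv, by assumption⟩
      have hqcard : q.support.card ≤ n := by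
        have h1 : (p.support \ T).card ≤ p.support.card - T.card := by
          rw [Finset.card_sdiff_of_subset (Finset.filter_subset _ _)]
        have h2 : 1 ≤ T.card := Finset.card_pos.mpr ⟨u, huT⟩
        have := Finset.card_le_card hqsupp
        omega
      have hq0 : π q = 0 := by
        rw [hq, map_sub, hp, zero_sub, neg_eq_zero]
        exact hle hrI
      have hqI : q ∈ I := ih q hqcard hq0
      have : p = q + r := by rw [hq]; ring
      rw [this]
      exact Ideal.add_mem _ hqI hrI
  apply le_antisymm
  · intro p hp
    exact hker p.support.card p le_rfl hp
  · exact hle
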